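/- The set of vector fields of the form (def q)(x)·x with q a polynomial vector field of degree at most k+1 equals the set of vector fields τ(x)·x with τ a symmetric-matrix-valued polynomial field of degree at most k: (def ℙ_{k+1}(ℝ^d; ℝ^d))·x = ℙ_k(ℝ^d; 𝕊)·x. -/

import Mathlib

open MvPolynomial Finset

/-- The symmetric gradient `def q = sym(∇q)` of a polynomial vector field. -/
noncomputable def defGrad (d : ℕ) (q : Fin d → MvPolynomial (Fin d) ℝ) :
    Fin d → Fin d → MvPolynomial (Fin d) ℝ :=
  fun i j => C (2⁻¹ : ℝ) * (pderiv j (q i) + pderiv i (q j))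

namespace Stmt11Aux

variable {d : ℕ}

abbrev P (d : ℕ) := MvPolynomial (Fin d) ℝ

lemma degree_eq_sum_fin (s : Fin d →₀ ℕ) : s.degree = ∑ j : Fin d, s j :=
  Finset.sum_subset (Finset.subset_univ _)
    (fun _ _ hx => Finsupp.notMem_support_iff.mp hx)

lemma sub_single_add (s : Fin d →₀ ℕ) (j : Fin d) (h : 1 ≤ s j) :
    s - Finsupp.single j 1 + Finsupp.single j 1 = s := by
  ext t
  simp only [Finsupp.add_apply, Finsupp.tsub_apply, Finsupp.single_apply]
  rcases eq_or_ne j t with rfl | ht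
  · simp; omega
  · simp [ht]

lemma degree_sub_single (s : Fin d →₀ ℕ) (j : Fin d) (h : 1 ≤ s j) :
    (s - Finsupp.single j 1).degree + 1 = s.degree := by
  rw [degree_eq_sum_fin, degree_eq_sum_fin,
    ← Finset.add_sum_erase _ _ (Finset.mem_univ j),
    ← Finset.add_sum_erase _ (⇑s) (Finset.mem_univ j)]
  have h1 : (s - Finsupp.single j 1 : Fin d →₀ ℕ) j = s j - 1 := by
    simp [Finsupp.tsub_apply]
  have h2 : ∀ t ∈ Finset.univ.erase j, (s - Finsupp.single j 1 : Fin d →₀ ℕ) t = s t := by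
    intro t ht
    simp [Finsupp.tsub_apply, Finsupp.single_apply,
      (Finset.ne_of_mem_erase ht).symm]
  rw [Finset.sum_congr rfl h2, h1]
  have e : ∑ x ∈ Finset.univ.erase j, s x = (Finset.univ.erase j).sum ⇑s := rfl
  omega

lemma euler_monomial (s : Fin d →₀ ℕ) (a : ℝ) :
    ∑ j : Fin d, pderiv j (monomial s a) * X j = C (s.degree : ℝ) * monomial s a := by
  have h : ∀ j : Fin d, pderiv j (monomial s a) * X j = C (s j : ℝ) * monomial s a := by
    intro j
    rw [pderiv_monomial]
    rcases Nat.eq_zero_or_pos (s j) with h0 | h0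
    · simp [h0]
    · rw [X, monomial_mul, mul_one, sub_single_add s j h0, C_mul_monomial, mul_comm]
  rw [Finset.sum_congr rfl (fun j _ => h j), ← Finset.sum_mul, ← map_sum,
    degree_eq_sum_fin]
  push_cast
  rfl

lemma degree_eq_of_mem_support {p : P d} {n : ℕ} (hp : p.IsHomogeneous n)
    {s : Fin d →₀ ℕ} (hs : s ∈ p.support) : s.degree = n := by
  rw [Finsupp.degree_eq_weight_one]
  exact hp (mem_support_iff.mp hs)

lemma euler {p : P d} {n : ℕ} (hp : p.IsHomogeneous n) :
    ∑ j : Fin d, pderiv j p * X j = C (n : ℝ) * p := by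
  conv_lhs => rw [p.as_sum]
  conv_rhs => rw [p.as_sum]
  rw [Finset.mul_sum]
  simp_rw [map_sum, Finset.sum_mul]
  rw [Finset.sum_comm]
  refine Finset.sum_congr rfl fun s hs => ?_
  rw [euler_monomial, degree_eq_of_mem_support hp hs]

lemma euler' {p : P d} {n : ℕ} (hp : p.IsHomogeneous n) :
    ∑ j : Fin d, pderiv j p * X j = (n : ℝ) • p := by
  rw [euler hp, C_mul']

lemma pderiv_isHomogeneous {p : P d} {n : ℕ} (j : Fin d) (hp : p.IsHomogeneous (n + 1)) :
    (pderiv j p).IsHomogeneous n := by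
  rw [p.as_sum, map_sum]
  apply IsHomogeneous.sum
  intro s hs
  rw [pderiv_monomial]
  rcases Nat.eq_zero_or_pos (s j) with h0 | h0
  · simp only [h0, Nat.cast_zero, mul_zero, map_zero]
    exact isHomogeneous_zero _ _ _
  · apply isHomogeneous_monomial
    have hd : s.degree = n + 1 := degree_eq_of_mem_support hp hs
    have := degree_sub_single s j h0
    omega

lemma sum_id_eq_degree (s : Fin d →₀ ℕ) : (s.sum fun _ e => e) = s.degree := rfl

lemma pderiv_totalDegree_le {p : P d} {n : ℕ} (j : Fin d) (h : p.totalDegree ≤ n + 1) :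
    (pderiv j p).totalDegree ≤ n := by
  conv_lhs => rw [p.as_sum, map_sum]
  apply totalDegree_finsetSum_le
  intro s hs
  rw [pderiv_monomial]
  rcases Nat.eq_zero_or_pos (s j) with h0 | h0
  · simp [h0]
  · refine (totalDegree_monomial_le _ _).trans ?_
    have hs' : s.degree ≤ n + 1 := by
      have := le_totalDegree hs
      rw [sum_id_eq_degree] at this
      omega
    have h2 := degree_sub_single s j h0
    have h3 : ((s - Finsupp.single j 1).sum fun _ ↦ id) = (s - Finsupp.single j 1).degree := rfl
    omega

lemma pderiv_of_hom0 {p : P d} (hp : p.IsHomogeneous 0) (j : Fin d) : pderiv j p = 0 := by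
  rw [p.as_sum, map_sum]
  apply Finset.sum_eq_zero
  intro s hs
  have h0 : s = 0 := by
    refine (Finsupp.degree_eq_zero_iff s).mp (degree_eq_of_mem_support hp hs)
  subst h0
  simp

lemma pderiv_sum_mul_X (i : Fin d) (f : Fin d → P d) :
    pderiv i (∑ j : Fin d, f j * X j) = (∑ j : Fin d, pderiv i (f j) * X j) + f i := by
  classical
  rw [map_sum]
  have h : ∀ j : Fin d, pderiv i (f j * X j)
      = pderiv i (f j) * X j + f j * pderiv i (X j) := fun j => pderiv_mul
  rw [Finset.sum_congr rfl (fun j _ => h j), Finset.sum_add_distrib]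
  congr 1
  rw [Finset.sum_eq_single i]
  · simp
  · intro b _ hb
    rw [pderiv_X_of_ne hb, mul_zero]
  · simp

noncomputable def wP (σ : Fin d → Fin d → P d) (i : Fin d) : P d := ∑ j : Fin d, σ i j * X j
noncomputable def φP (σ : Fin d → Fin d → P d) : P d := ∑ j : Fin d, wP σ j * X j
noncomputable def QP (c e : ℝ) (σ : Fin d → Fin d → P d) (i : Fin d) : P d :=
  c • wP σ i + e • pderiv i (φP σ)

noncomputable def cc (m : ℕ) : ℝ := if m = 0 then 1 else 2 / m
noncomputable def ee (m : ℕ) : ℝ := if m = 0 then 0 else -(1 / (m * (m + 1)))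

lemma wP_hom {σ : Fin d → Fin d → P d} {m : ℕ} (hσ : ∀ i j, (σ i j).IsHomogeneous m)
    (i : Fin d) : (wP σ i).IsHomogeneous (m + 1) :=
  IsHomogeneous.sum _ _ _ fun j _ => (hσ i j).mul (isHomogeneous_X ℝ j)

lemma φP_hom {σ : Fin d → Fin d → P d} {m : ℕ} (hσ : ∀ i j, (σ i j).IsHomogeneous m) :
    (φP σ).IsHomogeneous (m + 2) :=
  IsHomogeneous.sum _ _ _ fun j _ => (wP_hom hσ j).mul (isHomogeneous_X ℝ j)

lemma key {m : ℕ} {σ : Fin d → Fin d → P d} (hσ : ∀ i j, (σ i j).IsHomogeneous m)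
    (hsym : ∀ i j, σ i j = σ j i) (i : Fin d) :
    ∑ j : Fin d, C (2⁻¹ : ℝ) *
        (pderiv j (QP (cc m) (ee m) σ i) + pderiv i (QP (cc m) (ee m) σ j)) * X j
      = wP σ i := by
  have K1 : ∑ j : Fin d, pderiv j (wP σ i) * X j = ((m : ℝ) + 1) • wP σ i := by
    have := euler' (wP_hom hσ i); push_cast at this; exact this
  have K3 : ∑ j : Fin d, pderiv j (pderiv i (φP σ)) * X j
      = ((m : ℝ) + 1) • pderiv i (φP σ) := by
    have := euler' (pderiv_isHomogeneous i (show (φP σ).IsHomogeneous ((m + 1) + 1) by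
      simpa [add_assoc] using φP_hom hσ))
    push_cast at this; exact this
  have K2 : ∑ j : Fin d, pderiv i (wP σ j) * X j = pderiv i (φP σ) - wP σ i := by
    have := pderiv_sum_mul_X i (wP σ)
    rw [show (∑ j : Fin d, wP σ j * X j) = φP σ from rfl] at this
    rw [this]; ring
  have K4 : ∑ j : Fin d, pderiv i (pderiv j (φP σ)) * X j
      = ((m : ℝ) + 1) • pderiv i (φP σ) := by
    have h1 := pderiv_sum_mul_X i (fun j => pderiv j (φP σ))
    have h2 : ∑ j : Fin d, pderiv j (φP σ) * X j = ((m : ℝ) + 2) • φP σ := by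
      have := euler' (φP_hom hσ); push_cast at this; exact this
    rw [h2] at h1
    have h3 : pderiv i (((m : ℝ) + 2) • φP σ) = ((m : ℝ) + 2) • pderiv i (φP σ) :=
      (pderiv i).map_smul _ _
    rw [h3] at h1
    have h4 : (∑ j : Fin d, pderiv i (pderiv j (φP σ)) * X j)
        = ((m : ℝ) + 2) • pderiv i (φP σ) - pderiv i (φP σ) := eq_sub_of_add_eq h1.symm
    rw [h4]
    module
  have expand : ∑ j : Fin d, C (2⁻¹ : ℝ) *
        (pderiv j (QP (cc m) (ee m) σ i) + pderiv i (QP (cc m) (ee m) σ j)) * X j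
      = (2⁻¹ : ℝ) • ((cc m) • (∑ j : Fin d, pderiv j (wP σ i) * X j)
          + (ee m) • (∑ j : Fin d, pderiv j (pderiv i (φP σ)) * X j)
          + ((cc m) • (∑ j : Fin d, pderiv i (wP σ j) * X j)
          + (ee m) • (∑ j : Fin d, pderiv i (pderiv j (φP σ)) * X j))) := by
    simp only [QP, map_add, Derivation.map_smul, C_mul', smul_add, Finset.smul_sum,
      add_mul, smul_mul_assoc, Finset.sum_add_distrib]
  rw [expand, K1, K2, K3, K4]
  by_cases hm : m = 0
  · subst hm
    have K5 : ∑ j : Fin d, pderiv i (wP σ j) * X j = wP σ i := by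
      have hterm : ∀ j : Fin d, pderiv i (wP σ j) = σ j i := by
        intro j
        rw [show wP σ j = ∑ l : Fin d, σ j l * X l from rfl, map_sum]
        have hl : ∀ l : Fin d, pderiv i (σ j l * X l) = σ j l * pderiv i (X l) := by
          intro l
          rw [pderiv_mul, pderiv_of_hom0 (hσ j l) i, zero_mul, zero_add]
        rw [Finset.sum_congr rfl fun l _ => hl l, Finset.sum_eq_single i]
        · simp
        · intro b _ hb; rw [pderiv_X_of_ne hb, mul_zero]
        · simp
      calc ∑ j : Fin d, pderiv i (wP σ j) * X j = ∑ j : Fin d, σ j i * X j := by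
            refine Finset.sum_congr rfl fun j _ => by rw [hterm j]
        _ = ∑ j : Fin d, σ i j * X j := by
            refine Finset.sum_congr rfl fun j _ => by rw [hsym]
        _ = wP σ i := rfl
    have hD : pderiv i (φP σ) - wP σ i = wP σ i := by rw [← K2, K5]
    have hD' : pderiv i (φP σ) = wP σ i + wP σ i := by
      have := hD; linear_combination (norm := module) this
    rw [hD, hD']
    simp only [cc, ee, if_pos rfl]
    push_cast
    module
  · simp only [cc, ee, if_neg hm]
    have hm' : (m : ℝ) ≠ 0 := Nat.cast_ne_zero.mpr hm
    have hm1 : (m : ℝ) + 1 ≠ 0 := by positivity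
    match_scalars
    · field_simp
      ring
    · field_simp
      ring

end Stmt11Aux

open Stmt11Aux in
/-- `(def ℙ_{k+1}(ℝ^d; ℝ^d))·x = ℙ_k(ℝ^d; 𝕊)·x`. -/
theorem stmt_11 (d k : ℕ) (hd : 1 ≤ d) :
    {v : Fin d → MvPolynomial (Fin d) ℝ |
        ∃ q : Fin d → MvPolynomial (Fin d) ℝ, (∀ i, (q i).totalDegree ≤ k + 1) ∧
          v = fun i => ∑ j : Fin d, defGrad d q i j * X j} =
    {v : Fin d → MvPolynomial (Fin d) ℝ |
        ∃ τ : Fin d → Fin d → MvPolynomial (Fin d) ℝ,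
          (∀ i j, (τ i j).totalDegree ≤ k) ∧ (∀ i j, τ i j = τ j i) ∧
          v = fun i => ∑ j : Fin d, τ i j * X j} := by
  ext v
  simp only [Set.mem_setOf_eq]
  constructor
  · rintro ⟨q, hq, rfl⟩
    refine ⟨defGrad d q, ?_, ?_, rfl⟩
    · intro i j
      refine le_trans (totalDegree_mul _ _) ?_
      rw [totalDegree_C, zero_add]
      refine le_trans (totalDegree_add _ _) ?_
      exact max_le (pderiv_totalDegree_le _ (hq i)) (pderiv_totalDegree_le _ (hq j))
    · intro i j
      show C (2⁻¹ : ℝ) * (pderiv j (q i) + pderiv i (q j))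
        = C (2⁻¹ : ℝ) * (pderiv i (q j) + pderiv j (q i))
      rw [add_comm]
  · rintro ⟨τ, hdeg, hsym, rfl⟩
    set σc : ℕ → Fin d → Fin d → P d := fun m i j => homogeneousComponent m (τ i j) with hσc
    have hσm : ∀ m, ∀ a b : Fin d, ((σc m) a b).IsHomogeneous m :=
      fun m a b => homogeneousComponent_isHomogeneous m _
    have hsymm : ∀ m, ∀ a b : Fin d, σc m a b = σc m b a := by
      intro m a b
      simp only [hσc, hsym a b]
    have hτsum : ∀ a b : Fin d,
        ∑ m ∈ Finset.range (k + 1), σc m a b = τ a b := by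
      intro a b
      refine Eq.trans ?_ (sum_homogeneousComponent (τ a b))
      refine (Finset.sum_subset ?_ ?_).symm
      · exact Finset.range_subset_range.mpr (Nat.succ_le_succ (hdeg a b))
      · intro m _ hm
        refine homogeneousComponent_eq_zero _ _ ?_
        simp only [Finset.mem_range, not_lt] at hm
        omega
    refine ⟨fun i => ∑ m ∈ Finset.range (k + 1), QP (cc m) (ee m) (σc m) i, ?_, ?_⟩
    · intro i
      apply totalDegree_finsetSum_le
      intro m hm
      have hm' : m ≤ k := Nat.lt_succ_iff.mp (Finset.mem_range.mp hm)
      refine le_trans (totalDegree_add _ _) (max_le ?_ ?_)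
      · refine le_trans (totalDegree_smul_le _ _) ?_
        refine le_trans (wP_hom (hσm m) i).totalDegree_le ?_
        omega
      · refine le_trans (totalDegree_smul_le _ _) ?_
        refine le_trans (pderiv_isHomogeneous i
          (show (φP (σc m)).IsHomogeneous ((m + 1) + 1) by
            simpa [add_assoc] using φP_hom (hσm m))).totalDegree_le ?_
        omega
    · funext i
      refine Eq.symm ?_
      calc ∑ j : Fin d, defGrad d
              (fun i => ∑ m ∈ Finset.range (k + 1), QP (cc m) (ee m) (σc m) i) i j * X j
          = ∑ j : Fin d, ∑ m ∈ Finset.range (k + 1), C (2⁻¹ : ℝ) *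
              (pderiv j (QP (cc m) (ee m) (σc m) i)
                + pderiv i (QP (cc m) (ee m) (σc m) j)) * X j := by
            refine Finset.sum_congr rfl fun j _ => ?_
            show C (2⁻¹ : ℝ) * (pderiv j (∑ m ∈ Finset.range (k + 1), QP (cc m) (ee m) (σc m) i)
              + pderiv i (∑ m ∈ Finset.range (k + 1), QP (cc m) (ee m) (σc m) j)) * X j = _
            rw [map_sum, map_sum, ← Finset.sum_add_distrib, Finset.mul_sum, Finset.sum_mul]
        _ = ∑ m ∈ Finset.range (k + 1), ∑ j : Fin d, C (2⁻¹ : ℝ) *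
              (pderiv j (QP (cc m) (ee m) (σc m) i)
                + pderiv i (QP (cc m) (ee m) (σc m) j)) * X j := Finset.sum_comm
        _ = ∑ m ∈ Finset.range (k + 1), wP (σc m) i :=
            Finset.sum_congr rfl fun m _ => key (hσm m) (hsymm m) i
        _ = ∑ j : Fin d, (∑ m ∈ Finset.range (k + 1), σc m i j) * X j := by
            simp only [wP]
            rw [Finset.sum_comm]
            exact Finset.sum_congr rfl fun j _ => (Finset.sum_mul _ _ _).symm
        _ = ∑ j : Fin d, τ i j * X j := by
            exact Finset.sum_congr rfl fun j _ => by rw [hτsum i j]
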